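/- arXiv:0904.3770 — 8 statements merged into one kernel-verified Lean document; each statement's English description precedes it below -/
import Mathlib

section
/- Let A be an n×n skew-Hermitian complex matrix with zero diagonal blocks and let Λ be a metric datum. Then the real trace tr((Λ∙A)·(A·Y − Y·A)) vanishes for every n×n skew-Hermitian complex matrix Y with zero diagonal blocks if and only if the commutator A·(Λ∙A) − (Λ∙A)·A has all its off-diagonal-block entries equal to zero, i.e. (A·(Λ∙A) − (Λ∙A)·A) p q = 0 for all p, q with π p ≠ π q. -/
open Matrix BigOperators

/-- The blockwise Hadamard action of a metric datum `Λ` on a matrix `A`: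
`(Λ∙A) p q = Λ (π p) (π q) • A p q`. -/
def metricHadamard {n s : ℕ} (π : Fin n → Fin s) (Λ : Fin s → Fin s → ℝ)
    (A : Matrix (Fin n) (Fin n) ℂ) : Matrix (Fin n) (Fin n) ℂ :=
  Matrix.of fun p q => (Λ (π p) (π q) : ℂ) * A p q

/-- A tangent vector `A` is geodesic for the invariant metric determined by `Λ` (i.e. the
trace pairing `tr((Λ∙A)·[A,Y])` vanishes against every tangent direction `Y`) iff the
commutator `[A, Λ∙A]` has vanishing off-diagonal-block part. -/
theorem stmt0 (n s : ℕ) (hs : 1 ≤ s) (hn : 1 ≤ n)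
    (π : Fin n → Fin s) (hπ : Function.Surjective π)
    (A : Matrix (Fin n) (Fin n) ℂ) (hA : Aᴴ = -A)
    (hAblocks : ∀ p q, π p = π q → A p q = 0)
    (Λ : Fin s → Fin s → ℝ) (hΛsymm : ∀ i j, Λ i j = Λ j i)
    (hΛpos : ∀ i j, i ≠ j → 0 < Λ i j) :
    (∀ Y : Matrix (Fin n) (Fin n) ℂ, Yᴴ = -Y → (∀ p q, π p = π q → Y p q = 0) →
        (Matrix.trace (metricHadamard π Λ A * (A * Y - Y * A))).re = 0) ↔
      (∀ p q, π p ≠ π q →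
        (A * metricHadamard π Λ A - metricHadamard π Λ A * A) p q = 0) := by
  set B := metricHadamard π Λ A with hBdef
  set C := A * B - B * A with hCdef
  have hBH : Bᴴ = -B := by
    ext p q
    have h1 : (starRingEnd ℂ) (A q p) = -A p q := by
      have := congrFun (congrFun hA p) q
      simpa [Matrix.conjTranspose_apply] using this
    simp only [hBdef, metricHadamard, Matrix.conjTranspose_apply, Matrix.of_apply,
      Matrix.neg_apply]
    simp only [star_mul', Complex.star_def, Complex.conj_ofReal, h1, hΛsymm (π q) (π p)]
    ring
  have hCH : Cᴴ = -C := by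
    rw [hCdef, Matrix.conjTranspose_sub, Matrix.conjTranspose_mul, Matrix.conjTranspose_mul,
      hA, hBH]
    simp [neg_sub]
  have hCconj : ∀ a b, C b a = -(starRingEnd ℂ) (C a b) := by
    intro a b
    have := congrFun (congrFun hCH a) b
    simp only [Matrix.conjTranspose_apply, Matrix.neg_apply] at this
    have := congrArg (starRingEnd ℂ) this
    simpa using this
  have htr : ∀ Y : Matrix (Fin n) (Fin n) ℂ,
      Matrix.trace (B * (A * Y - Y * A)) = -(Matrix.trace (C * Y)) := by
    intro Y
    have h1 : Matrix.trace (B * (Y * A)) = Matrix.trace ((A * B) * Y) := by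
      rw [← mul_assoc, Matrix.trace_mul_comm, ← mul_assoc]
    rw [mul_sub, Matrix.trace_sub, hCdef, sub_mul, Matrix.trace_sub, ← mul_assoc, h1]
    ring
  have htrCY : ∀ Y : Matrix (Fin n) (Fin n) ℂ,
      Matrix.trace (C * Y) = ∑ a, ∑ b, C a b * Y b a := by
    intro Y
    simp [Matrix.trace, Matrix.diag, Matrix.mul_apply]
  constructor
  · intro H p q hpq
    set Y : Matrix (Fin n) (Fin n) ℂ :=
      Matrix.of fun a b => if π a = π b then 0 else C a b with hYdef
    have hYH : Yᴴ = -Y := by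
      ext a b
      simp only [hYdef, Matrix.conjTranspose_apply, Matrix.of_apply, Matrix.neg_apply]
      by_cases h : π a = π b
      · rw [if_pos h.symm, if_pos h]
        simp
      · rw [if_neg (fun hh => h hh.symm), if_neg h]
        rw [hCconj a b]
        simp
    have hYb : ∀ a b, π a = π b → Y a b = 0 := by
      intro a b h
      simp only [hYdef, Matrix.of_apply]
      rw [if_pos h]
    have hzero := H Y hYH hYb
    rw [htr Y] at hzero
    have hre : (Matrix.trace (C * Y)).re = 0 := by
      simpa using hzero
    have key : (Matrix.trace (C * Y)).re
        = -∑ a, ∑ b, (if π a = π b then (0:ℝ) else Complex.normSq (C a b)) := by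
      rw [htrCY Y]
      rw [← Finset.sum_neg_distrib]
      rw [Complex.re_sum]
      refine Finset.sum_congr rfl fun a _ => ?_
      rw [← Finset.sum_neg_distrib]
      rw [Complex.re_sum]
      refine Finset.sum_congr rfl fun b _ => ?_
      by_cases h : π a = π b
      · have hy : Y b a = 0 := by
          simp only [hYdef, Matrix.of_apply]
          rw [if_pos h.symm]
        rw [if_pos h, hy, mul_zero]
        simp
      · have hy : Y b a = C b a := by
          simp only [hYdef, Matrix.of_apply]
          rw [if_neg (fun hh => h hh.symm)]
        rw [if_neg h, hy, hCconj a b]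
        simp [Complex.mul_conj]
    rw [key, neg_eq_zero] at hre
    have hnn : ∀ a b, (0:ℝ) ≤ (if π a = π b then (0:ℝ) else Complex.normSq (C a b)) := by
      intro a b
      split
      · exact le_refl 0
      · exact Complex.normSq_nonneg _
    have houter := (Finset.sum_eq_zero_iff_of_nonneg
      (fun a _ => Finset.sum_nonneg fun b _ => hnn a b)).mp hre p (Finset.mem_univ p)
    have hinner := (Finset.sum_eq_zero_iff_of_nonneg
      (fun b _ => hnn p b)).mp houter q (Finset.mem_univ q)
    rw [if_neg hpq] at hinner
    exact Complex.normSq_eq_zero.mp hinner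
  · intro h Y hYH hYb
    rw [htr Y, htrCY Y]
    have : (∑ a, ∑ b, C a b * Y b a) = 0 := by
      refine Finset.sum_eq_zero fun a _ => Finset.sum_eq_zero fun b _ => ?_
      by_cases hab : π a = π b
      · rw [hYb b a hab.symm, mul_zero]
      · rw [h a b hab, zero_mul]
    rw [this]
    simp
end

section
/- Let A be an n×n skew-Hermitian complex matrix with zero diagonal blocks. Then the commutator A·(Λ∙A) − (Λ∙A)·A has all its off-diagonal-block entries equal to zero for EVERY metric datum Λ if and only if A satisfies the equigeodesic condition: a_{ij}·a_{jm} = 0 (matrix product of blocks) for all pairwise distinct block indices i, j, m; explicitly, for all p, q and every block index j with π p, π q, j pairwise distinct, Σ_{r with π r = j} A p r · A r q = 0. -/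
open Matrix BigOperators

lemma comm_apply {n s : ℕ} (π : Fin n → Fin s) (Λ : Fin s → Fin s → ℝ)
    (A : Matrix (Fin n) (Fin n) ℂ) (p q : Fin n) :
    (A * metricHadamard π Λ A - metricHadamard π Λ A * A) p q
      = ∑ r, ((Λ (π r) (π q) : ℂ) - Λ (π p) (π r)) * (A p r * A r q) := by
  simp only [Matrix.sub_apply, Matrix.mul_apply, metricHadamard, Matrix.of_apply,
    ← Finset.sum_sub_distrib]
  refine Finset.sum_congr rfl fun r _ => by ring

/-- `[A, Λ∙A]` has vanishing off-diagonal-block entries for every metric datum `Λ` iff `A`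
satisfies the equigeodesic condition: the blockwise products `a_{ij}·a_{jm}` vanish for all
pairwise distinct block indices `i, j, m`. -/
theorem stmt3 (n s : ℕ) (π : Fin n → Fin s) (hπ : Function.Surjective π)
    (A : Matrix (Fin n) (Fin n) ℂ) (hA : Aᴴ = -A)
    (hAblocks : ∀ p q, π p = π q → A p q = 0) :
    (∀ Λ : Fin s → Fin s → ℝ, (∀ i j, Λ i j = Λ j i) → (∀ i j, i ≠ j → 0 < Λ i j) →
        ∀ p q, π p ≠ π q →
          (A * metricHadamard π Λ A - metricHadamard π Λ A * A) p q = 0) ↔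
      (∀ (p q : Fin n) (j : Fin s), π p ≠ π q → π p ≠ j → π q ≠ j →
        ∑ r ∈ Finset.univ.filter (fun r => π r = j), A p r * A r q = 0) := by
  constructor
  · intro h p q j hpq hpj hqj
    set Λ : Fin s → Fin s → ℝ := fun a b =>
      if (a = j ∧ b = π q) ∨ (a = π q ∧ b = j) then 2 else 1 with hΛ
    have hsymm : ∀ i k, Λ i k = Λ k i := by
      intro i k; simp only [hΛ]
      have : ((i = j ∧ k = π q) ∨ (i = π q ∧ k = j)) ↔
          ((k = j ∧ i = π q) ∨ (k = π q ∧ i = j)) := by tauto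
      simp [this]
    have hpos : ∀ i k, i ≠ k → 0 < Λ i k := by
      intro i k _; simp only [hΛ]; split_ifs <;> norm_num
    have hc := h Λ hsymm hpos p q hpq
    rw [comm_apply] at hc
    have hΛ1 : ∀ r : Fin n, (Λ (π r) (π q) : ℂ) = if π r = j then 2 else 1 := by
      intro r; simp only [hΛ]
      by_cases hr : π r = j
      · simp [hr, Ne.symm hqj]
      · simp [hr, hqj]
    have hΛ2 : ∀ r : Fin n, (Λ (π p) (π r) : ℂ) = 1 := by
      intro r; simp only [hΛ]
      have : ¬ ((π p = j ∧ π r = π q) ∨ (π p = π q ∧ π r = j)) := by tauto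
      simp [this]
    rw [← hc]
    rw [Finset.sum_filter]
    refine Finset.sum_congr rfl fun r _ => ?_
    rw [hΛ1 r, hΛ2 r]
    by_cases hr : π r = j
    · rw [if_pos hr, if_pos hr]; ring
    · rw [if_neg hr, if_neg hr]; ring
  · intro h Λ hsymm hpos p q hpq
    rw [comm_apply]
    rw [← Finset.sum_fiberwise_of_maps_to (g := π) (fun r _ => Finset.mem_univ (π r))]
    refine Finset.sum_eq_zero fun j' _ => ?_
    rcases eq_or_ne j' (π p) with hjp | hjp
    · refine Finset.sum_eq_zero fun r hr => ?_
      rw [Finset.mem_filter] at hr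
      have : A p r = 0 := hAblocks p r (by rw [hr.2, hjp])
      simp [this]
    rcases eq_or_ne j' (π q) with hjq | hjq
    · refine Finset.sum_eq_zero fun r hr => ?_
      rw [Finset.mem_filter] at hr
      have : A r q = 0 := hAblocks r q (by rw [hr.2, hjq])
      simp [this]
    have hsum := h p q j' hpq (Ne.symm hjp) (Ne.symm hjq)
    calc ∑ r ∈ Finset.univ.filter (fun r => π r = j'),
            ((Λ (π r) (π q) : ℂ) - Λ (π p) (π r)) * (A p r * A r q)
        = ∑ r ∈ Finset.univ.filter (fun r => π r = j'),
            ((Λ j' (π q) : ℂ) - Λ (π p) j') * (A p r * A r q) := by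
          refine Finset.sum_congr rfl fun r hr => ?_
          rw [Finset.mem_filter] at hr
          rw [hr.2]
      _ = ((Λ j' (π q) : ℂ) - Λ (π p) j') *
            ∑ r ∈ Finset.univ.filter (fun r => π r = j'), A p r * A r q := by
          rw [Finset.mul_sum]
      _ = 0 := by rw [hsum, mul_zero]
end

section
/- Let J be an n×n skew-Hermitian complex matrix with zero diagonal entries which is essentially diagonal. Then a complex number λ is an eigenvalue of J if and only if either (λ = i·|J p q| or λ = −i·|J p q|) for some entry J p q ≠ 0, or λ = 0 and J has a zero row. In particular every nonzero eigenvalue of J equals ±i times the absolute value of a nonzero entry of J. -/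
open Matrix BigOperators

/-- A square matrix is essentially diagonal if it has at most one nonzero entry in each
row and in each column. -/
def EssentiallyDiagonal {n : ℕ} (M : Matrix (Fin n) (Fin n) ℂ) : Prop :=
  (∀ p q q', M p q ≠ 0 → M p q' ≠ 0 → q = q') ∧
  (∀ p p' q, M p q ≠ 0 → M p' q ≠ 0 → p = p')

/-- The eigenvalues of an essentially diagonal skew-Hermitian matrix `J` with zero
diagonal: `λ` is an eigenvalue iff `λ = ± i·|J p q|` for some nonzero entry `J p q`, or
`λ = 0` and `J` has a zero row. In particular every nonzero eigenvalue is `±i` times the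
absolute value of a nonzero entry. -/
theorem stmt7 (n : ℕ) (J : Matrix (Fin n) (Fin n) ℂ) (hJ : Jᴴ = -J)
    (hJdiag : ∀ p, J p p = 0) (hED : EssentiallyDiagonal J) (lam : ℂ) :
    (∃ v : Fin n → ℂ, v ≠ 0 ∧ J.mulVec v = lam • v) ↔
      ((∃ p q, J p q ≠ 0 ∧
          (lam = Complex.I * (‖J p q‖ : ℂ) ∨
            lam = -(Complex.I * (‖J p q‖ : ℂ)))) ∨
        (lam = 0 ∧ ∃ p, ∀ q, J p q = 0)) := by
  have hskew : ∀ p q, J q p = -(starRingEnd ℂ) (J p q) := by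
    intro p q
    have h := congrFun (congrFun hJ q) p
    simp only [conjTranspose_apply, Matrix.neg_apply] at h
    rw [show (starRingEnd ℂ) (J p q) = star (J p q) from rfl, h, neg_neg]
  constructor
  · rintro ⟨v, hv, hmul⟩
    by_cases hlam : lam = 0
    · subst hlam
      right
      refine ⟨rfl, ?_⟩
      by_contra hno
      push_neg at hno
      apply hv
      funext s
      obtain ⟨q, hq⟩ := hno s
      have hqs : J q s ≠ 0 := by
        rw [hskew s q]
        simpa using hq
      have h0 : J.mulVec v q = 0 := by
        rw [hmul]; simp
      have hsum : J.mulVec v q = J q s * v s := by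
        rw [mulVec, dotProduct]
        refine Finset.sum_eq_single s (fun t _ ht => ?_) (by simp)
        rcases eq_or_ne (J q t) 0 with h | h
        · rw [h, zero_mul]
        · exact absurd (hED.1 q t s h hqs) ht
      rw [hsum] at h0
      simpa [hqs] using h0
    · left
      obtain ⟨r, hr⟩ := Function.ne_iff.mp hv
      have h1 : J.mulVec v r = lam * v r := by rw [hmul]; simp
      have hne : ∃ s, J r s * v s ≠ 0 := by
        by_contra h
        push_neg at h
        have : J.mulVec v r = 0 := by
          rw [mulVec, dotProduct]
          exact Finset.sum_eq_zero fun t _ => h t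
        rw [h1] at this
        exact (mul_ne_zero hlam hr) this
      obtain ⟨s, hs⟩ := hne
      have hJrs : J r s ≠ 0 := left_ne_zero_of_mul hs
      have hvs : v s ≠ 0 := right_ne_zero_of_mul hs
      have hJsr : J s r ≠ 0 := by
        rw [hskew r s]; simpa using hJrs
      have hsum1 : J.mulVec v r = J r s * v s := by
        rw [mulVec, dotProduct]
        refine Finset.sum_eq_single s (fun t _ ht => ?_) (by simp)
        rcases eq_or_ne (J r t) 0 with h | h
        · rw [h, zero_mul]
        · exact absurd (hED.1 r t s h hJrs) ht
      have hsum2 : J.mulVec v s = J s r * v r := by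
        rw [mulVec, dotProduct]
        refine Finset.sum_eq_single r (fun t _ ht => ?_) (by simp)
        rcases eq_or_ne (J s t) 0 with h | h
        · rw [h, zero_mul]
        · exact absurd (hED.1 s t r h hJsr) ht
      have h2 : J.mulVec v s = lam * v s := by rw [hmul]; simp
      have e1 : J r s * v s = lam * v r := by rw [← hsum1, h1]
      have e2 : J s r * v r = lam * v s := by rw [← hsum2, h2]
      rw [hskew r s] at e2
      set c := J r s with hc
      have key : (lam ^ 2 + (‖c‖ : ℂ) ^ 2) * v r = 0 := by
        have : lam ^ 2 * v r = -((starRingEnd ℂ) c * c) * v r := by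
          calc lam ^ 2 * v r = lam * (lam * v r) := by ring
            _ = lam * (c * v s) := by rw [e1]
            _ = c * (lam * v s) := by ring
            _ = c * (-(starRingEnd ℂ) c * v r) := by rw [← e2]
            _ = -((starRingEnd ℂ) c * c) * v r := by ring
        have habs : (starRingEnd ℂ) c * c = (‖c‖ : ℂ) ^ 2 := by
          rw [mul_comm, Complex.mul_conj, Complex.normSq_eq_norm_sq]
          push_cast
          ring
        rw [habs] at this
        linear_combination this
      have key2 : lam ^ 2 + (‖c‖ : ℂ) ^ 2 = 0 :=
        (mul_eq_zero.mp key).resolve_right hr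
      refine ⟨r, s, hJrs, ?_⟩
      have hfac : (lam - Complex.I * (‖c‖ : ℂ)) *
          (lam + Complex.I * (‖c‖ : ℂ)) = 0 := by
        have : (lam - Complex.I * (‖c‖ : ℂ)) *
            (lam + Complex.I * (‖c‖ : ℂ))
            = lam ^ 2 - Complex.I ^ 2 * (‖c‖ : ℂ) ^ 2 := by ring
        rw [this, Complex.I_sq]
        linear_combination key2
      rcases mul_eq_zero.mp hfac with h | h
      · exact Or.inl (by linear_combination h)
      · exact Or.inr (by linear_combination h)
  · rintro (⟨p, q, hpq, hl⟩ | ⟨hl0, p, hp⟩)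
    · have hqp : J q p = -(starRingEnd ℂ) (J p q) := hskew p q
      have hqp' : J q p ≠ 0 := by rw [hqp]; simpa using hpq
      have hpneq : p ≠ q := fun h => hpq (by rw [h]; exact hJdiag q)
      refine ⟨Pi.single p (J p q) + Pi.single q lam, ?_, ?_⟩
      · intro h
        apply hpq
        have := congrFun h p
        simpa [Pi.single_apply, hpneq, hpneq.symm] using this
      · have hlsq : lam ^ 2 = -((‖J p q‖ : ℂ) ^ 2) := by
          rcases hl with h | h <;> subst h <;>
            linear_combination ((‖J p q‖ : ℂ) ^ 2) * Complex.I_sq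
        have habs : (starRingEnd ℂ) (J p q) * (J p q) = (‖J p q‖ : ℂ) ^ 2 := by
          rw [mul_comm, Complex.mul_conj, Complex.normSq_eq_norm_sq]
          push_cast; ring
        funext r
        rw [mulVec_add, Pi.add_apply, mulVec_single, mulVec_single]
        simp only [Pi.smul_apply, Pi.add_apply, Pi.single_apply, smul_eq_mul, op_smul_eq_mul, col_apply]
        rcases eq_or_ne r p with hrp | hrp
        · rw [hrp, if_pos rfl, if_neg hpneq, hJdiag]
          ring
        · rcases eq_or_ne r q with hrq | hrq
          · rw [hrq, if_neg (Ne.symm hpneq), if_pos rfl, hJdiag, hqp]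
            linear_combination -habs - hlsq
          · have h1 : J r p = 0 := by
              by_contra h
              exact hrq (hED.2 r q p h hqp')
            have h2 : J r q = 0 := by
              by_contra h
              exact hrp (hED.2 r p q h hpq)
            rw [h1, h2, if_neg hrp, if_neg hrq]
            ring
    · refine ⟨Pi.single p 1, ?_, ?_⟩
      · intro h
        have := congrFun h p
        simp at this
      · funext r
        rw [mulVec_single]
        simp only [Pi.smul_apply, Pi.single_apply, smul_eq_mul, op_smul_eq_mul, col_apply]
        have : J r p = 0 := by rw [hskew p r, hp r, map_zero, neg_zero]
        rw [this, hl0]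
        simp
end

section
/- Let A be an n×n skew-Hermitian complex matrix with zero diagonal entries. Then A satisfies A p q · A q r = 0 for all pairwise distinct indices p, q, r if and only if A is essentially diagonal, i.e. A has at most one nonzero entry in each row and in each column. -/
open Matrix BigOperators

/-- A skew-Hermitian matrix with zero diagonal satisfies the (full flag) equigeodesic
condition `A p q · A q r = 0` for pairwise distinct `p, q, r` iff it is essentially
diagonal. -/
theorem stmt8 (n : ℕ) (A : Matrix (Fin n) (Fin n) ℂ) (hA : Aᴴ = -A)
    (hAdiag : ∀ p, A p p = 0) :
    (∀ p q r : Fin n, p ≠ q → q ≠ r → p ≠ r → A p q * A q r = 0) ↔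
      EssentiallyDiagonal A := by
  have hsw : ∀ a b : Fin n, A a b ≠ 0 → A b a ≠ 0 := by
    intro a b h
    have : Aᴴ b a = -A b a := by rw [hA]; rfl
    have hc : (starRingEnd ℂ) (A a b) = -A b a := this
    intro h0
    apply h
    have : (starRingEnd ℂ) (A a b) = 0 := by rw [hc, h0, neg_zero]
    exact star_eq_zero.mp this
  constructor
  · intro h
    constructor
    · intro p q q' hq hq'
      by_contra hne
      have hpq : p ≠ q := fun e => hq (e ▸ hAdiag q)
      have hpq' : p ≠ q' := fun e => hq' (e ▸ hAdiag q')
      have := h q' p q (Ne.symm hpq') hpq (fun e => hne e.symm)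
      exact hq (by
        have hqp' := hsw p q' hq'
        rcases mul_eq_zero.mp this with h1 | h1
        · exact absurd h1 hqp'
        · exact h1)
    · intro p p' q hp hp'
      by_contra hne
      have hpq : p ≠ q := fun e => hp (e ▸ hAdiag q)
      have hp'q : p' ≠ q := fun e => hp' (e ▸ hAdiag q)
      have := h p q p' hpq (Ne.symm hp'q) hne
      rcases mul_eq_zero.mp this with h1 | h1
      · exact hp h1
      · exact hsw p' q hp' h1
  · rintro ⟨hrow, _⟩ p q r hpq hqr hpr
    by_contra h
    have h1 : A p q ≠ 0 := fun h0 => h (by rw [h0, zero_mul])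
    have h2 : A q r ≠ 0 := fun h0 => h (by rw [h0, mul_zero])
    have h3 : A q p ≠ 0 := hsw p q h1
    exact hpr (hrow q p r h3 h2)
end

section
/- Let A be an n×n skew-Hermitian complex matrix with zero diagonal entries which is essentially diagonal, and suppose the absolute values of its entries are commensurate: there exists c ∈ ℝ such that for all p, q there is an integer m with |A p q| = m·c. Then there exists T > 0 with exp(T·A) = 1; in particular the homogeneous geodesic t ↦ exp(tA)·o on the full flag manifold F(n) determined by A is closed. -/
open Matrix NormedSpace

/-- If `A` is skew-Hermitian with zero diagonal, essentially diagonal, and the absolute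
values of its entries are commensurate, then the one-parameter group `t ↦ exp(tA)` is
periodic: there is `T > 0` with `exp(T·A) = 1`; hence the corresponding homogeneous
geodesic on the full flag manifold is closed. -/
theorem stmt10 (n : ℕ) (A : Matrix (Fin n) (Fin n) ℂ) (hA : Aᴴ = -A)
    (hAdiag : ∀ p, A p p = 0) (hED : EssentiallyDiagonal A)
    (hcomm : ∃ c : ℝ, ∀ p q : Fin n, ∃ m : ℤ, (‖A p q‖ : ℝ) = (m : ℝ) * c) :
    ∃ T : ℝ, 0 < T ∧ exp (T • A) = 1 := by
  by_cases hA0 : A = 0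
  · exact ⟨1, one_pos, by simp [hA0, exp_zero]⟩
  -- get a positive commensurability constant
  obtain ⟨c, hcpos, hc⟩ : ∃ c : ℝ, 0 < c ∧
      ∀ p q : Fin n, ∃ m : ℤ, (‖A p q‖ : ℝ) = (m : ℝ) * c := by
    obtain ⟨c, hc⟩ := hcomm
    have hc0 : c ≠ 0 := by
      rintro rfl
      apply hA0
      ext p q
      obtain ⟨m, hm⟩ := hc p q
      rw [mul_zero] at hm
      exact norm_eq_zero.mp hm
    refine ⟨|c|, abs_pos.mpr hc0, fun p q => ?_⟩
    obtain ⟨m, hm⟩ := hc p q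
    refine ⟨|m|, ?_⟩
    have h1 : (0:ℝ) ≤ (m:ℝ) * c := hm ▸ norm_nonneg _
    rw [hm, ← abs_of_nonneg h1, abs_mul]
    push_cast
    ring
  -- B is Hermitian
  set B : Matrix (Fin n) (Fin n) ℂ := Complex.I • A with hBdef
  have hB : B.IsHermitian := by
    unfold Matrix.IsHermitian
    rw [hBdef, conjTranspose_smul, hA]
    simp [Complex.star_def, Complex.conj_I]
  -- B * B is diagonal with entries ∑ q, normSq (A p q)
  have hskew : ∀ p q, A q p = -(starRingEnd ℂ) (A p q) := by
    intro p q
    have := congrFun (congrFun hA q) p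
    simp [Matrix.conjTranspose_apply] at this
    rw [this, neg_neg]
  have hBB : B * B = Matrix.diagonal (fun p => ((∑ q, Complex.normSq (A p q) : ℝ) : ℂ)) := by
    ext p p'
    simp only [hBdef, Matrix.mul_apply, Matrix.smul_apply, smul_eq_mul]
    by_cases hpp : p = p'
    · subst hpp
      rw [Matrix.diagonal_apply_eq]
      push_cast
      refine Finset.sum_congr rfl fun q _ => ?_
      rw [hskew p q,
        show Complex.I * A p q * (Complex.I * -(starRingEnd ℂ) (A p q))
          = -(Complex.I ^ 2) * (A p q * (starRingEnd ℂ) (A p q)) by ring,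
        Complex.I_sq, Complex.mul_conj]
      ring
    · rw [Matrix.diagonal_apply_ne _ hpp]
      apply Finset.sum_eq_zero
      intro q _
      by_cases h1 : A p q = 0
      · rw [h1]; ring
      by_cases h2 : A q p' = 0
      · rw [h2]; ring
      exfalso
      apply hpp
      have h2' : A p' q ≠ 0 := by
        intro h
        exact h2 (by rw [hskew p' q, h, map_zero, neg_zero])
      exact hED.2 p p' q h1 h2'
  -- eigenvalues of B are integer multiples of c
  have key : ∀ j, ∃ m : ℤ, hB.eigenvalues j = (m : ℝ) * c := by
    intro j
    have hv := hB.mulVec_eigenvectorBasis j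
    set v : Fin n → ℂ := ⇑(hB.eigenvectorBasis j) with hvdef
    have hv2 : (B * B) *ᵥ v = (hB.eigenvalues j ^ 2) • v := by
      rw [← Matrix.mulVec_mulVec, hv, Matrix.mulVec_smul, hv, smul_smul, ← sq]
    obtain ⟨p, hp⟩ : ∃ p, v p ≠ 0 := by
      by_contra h
      push_neg at h
      have h0 : hB.eigenvectorBasis j = 0 := by
        ext p; exact h p
      exact (hB.eigenvectorBasis).orthonormal.ne_zero j h0
    have hp2 := congrFun hv2 p
    rw [hBB, Matrix.mulVec_diagonal] at hp2
    rw [Pi.smul_apply, Complex.real_smul] at hp2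
    have hd : (∑ q, Complex.normSq (A p q)) = hB.eigenvalues j ^ 2 := by
      exact_mod_cast mul_right_cancel₀ hp hp2
    by_cases hz : ∀ q, A p q = 0
    · refine ⟨0, ?_⟩
      have h0 : hB.eigenvalues j ^ 2 = 0 := by
        rw [← hd]
        simp [hz]
      simpa using pow_eq_zero_iff (n := 2) (by norm_num) |>.mp h0
    · push_neg at hz
      obtain ⟨q0, hq0⟩ := hz
      have hsum : (∑ q, Complex.normSq (A p q)) = Complex.normSq (A p q0) := by
        refine Finset.sum_eq_single q0 (fun q _ hq => ?_) (fun h => absurd (Finset.mem_univ q0) h)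
        by_cases hzz : A p q = 0
        · rw [hzz]; simp
        · exact absurd (hED.1 p q q0 hzz hq0) hq
      obtain ⟨m, hm⟩ := hc p q0
      have hsq : hB.eigenvalues j ^ 2 = ((m:ℝ) * c)^2 := by
        rw [← hd, hsum, ← Complex.sq_norm, hm]
      have h2 : (hB.eigenvalues j - (m:ℝ)*c) * (hB.eigenvalues j + (m:ℝ)*c) = 0 := by
        linear_combination hsq
      rcases mul_eq_zero.mp h2 with h|h
      · exact ⟨m, by linarith⟩
      · exact ⟨-m, by push_cast; linarith⟩
  -- conclude
  refine ⟨2 * Real.pi / c, by positivity, ?_⟩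
  set T : ℝ := 2 * Real.pi / c with hT
  have hTA : T • A = (-(T:ℂ) * Complex.I) • B := by
    rw [hBdef, smul_smul,
      show -(T:ℂ) * Complex.I * Complex.I = (T:ℂ) by
        rw [mul_assoc, Complex.I_mul_I]; ring]
    ext p q
    simp [Complex.real_smul]
  rw [hTA]
  set U : Matrix (Fin n) (Fin n) ℂ := (hB.eigenvectorUnitary : Matrix (Fin n) (Fin n) ℂ)
    with hUdef
  have hUU : U * star U = 1 := mem_unitaryGroup_iff.mp (hB.eigenvectorUnitary).2
  have hUU' : star U * U = 1 := mem_unitaryGroup_iff'.mp (hB.eigenvectorUnitary).2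
  have hUunit : IsUnit U := ⟨⟨U, star U, hUU, hUU'⟩, rfl⟩
  have hUinv : U⁻¹ = star U := inv_eq_left_inv hUU'
  have hdiag1 : exp ((-(T:ℂ) * Complex.I) •
      Matrix.diagonal ((RCLike.ofReal ∘ hB.eigenvalues : Fin n → ℂ))) = 1 := by
    rw [← Matrix.diagonal_smul, Matrix.exp_diagonal, Pi.exp_def]
    have : (fun i => exp (((-(T:ℂ) * Complex.I) • ((RCLike.ofReal ∘ hB.eigenvalues : Fin n → ℂ))) i))
        = fun _ => (1 : ℂ) := by
      funext i
      obtain ⟨m, hm⟩ := key i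
      rw [← Complex.exp_eq_exp_ℂ]
      have hcne : (c:ℂ) ≠ 0 := Complex.ofReal_ne_zero.mpr (ne_of_gt hcpos)
      have hval : ((-(T:ℂ) * Complex.I) • ((RCLike.ofReal ∘ hB.eigenvalues : Fin n → ℂ))) i
          = ((-m : ℤ):ℂ) * (2 * Real.pi * Complex.I) := by
        simp only [Pi.smul_apply, Function.comp_apply, smul_eq_mul, hm, hT]
        push_cast
        field_simp
        exact congrArg Neg.neg (mul_comm _ _)
      rw [hval, Complex.exp_int_mul_two_pi_mul_I]
    rw [this, Matrix.diagonal_one]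
  calc exp ((-(T:ℂ) * Complex.I) • B)
      = exp (U * ((-(T:ℂ) * Complex.I) •
          Matrix.diagonal ((RCLike.ofReal ∘ hB.eigenvalues : Fin n → ℂ))) * U⁻¹) := by
        congr 1
        rw [hUinv, Matrix.mul_smul, Matrix.smul_mul]
        exact congrArg (fun M => (-(T:ℂ) * Complex.I) • M) hB.spectral_theorem
    _ = U * exp ((-(T:ℂ) * Complex.I) •
          Matrix.diagonal ((RCLike.ofReal ∘ hB.eigenvalues : Fin n → ℂ))) * U⁻¹ :=
        Matrix.exp_conj U _ hUunit
    _ = 1 := by rw [hdiag1, mul_one, hUinv, hUU]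
end

section
/- Fix n ≥ 2, distinct indices p ≠ q in Fin n, and a nonzero complex number z. Let X = z·E_pq − conj(z)·E_qp (an n×n skew-Hermitian matrix). Then exp((2π/|z|)·X) = 1, the identity matrix; hence the curve t ↦ exp(tX) is periodic and the corresponding homogeneous geodesic on the full flag manifold F(n) is closed. -/
open Matrix NormedSpace

lemma exp_smul_of_idem' {𝔸 : Type*} [NormedRing 𝔸] [NormedAlgebra ℂ 𝔸] [CompleteSpace 𝔸]
    (P : 𝔸) (hP : P * P = P) (c : ℂ) :
    exp (c • P) = 1 + (Complex.exp c - 1) • P := by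
  have hPpow : ∀ k : ℕ, P ^ (k + 1) = P := by
    intro k
    induction k with
    | zero => simp
    | succ k ih => rw [pow_succ, ih, hP]
  have hpow : ∀ k : ℕ, (c • P) ^ (k + 1) = c ^ (k + 1) • P := by
    intro k; rw [smul_pow, hPpow]
  have hsum0 : Summable fun n : ℕ => ((Nat.factorial n : ℂ))⁻¹ * c ^ n := by
    have := (expSeries_summable' (𝕂 := ℂ) (𝔸 := ℂ) c)
    simpa [smul_eq_mul] using this
  have hsc : Summable fun k : ℕ => ((Nat.factorial (k + 1) : ℂ))⁻¹ * c ^ (k + 1) :=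
    (summable_nat_add_iff (f := fun n => ((Nat.factorial n : ℂ))⁻¹ * c ^ n) 1).2 hsum0
  have hcs : ∑' k : ℕ, ((Nat.factorial (k + 1) : ℂ))⁻¹ * c ^ (k + 1) = Complex.exp c - 1 := by
    have hexp : Complex.exp c = ∑' n : ℕ, ((Nat.factorial n : ℂ))⁻¹ * c ^ n := by
      rw [Complex.exp_eq_exp_ℂ, exp_eq_tsum ℂ]; simp [smul_eq_mul]
    rw [hexp, Summable.tsum_eq_zero_add hsum0]
    simp
  rw [exp_eq_tsum ℂ]; beta_reduce
  rw [Summable.tsum_eq_zero_add (expSeries_summable' (𝕂 := ℂ) (c • P))]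
  simp only [hpow, pow_zero, Nat.factorial_zero, Nat.cast_one, inv_one, one_smul, smul_smul]
  rw [Summable.tsum_smul_const, hcs]
  exact hsc

lemma matrix_exp_smul_of_idem {m : Type*} [Fintype m] [DecidableEq m]
    (P : Matrix m m ℂ) (hP : P * P = P) (c : ℂ) :
    exp (c • P) = 1 + (Complex.exp c - 1) • P := by
  letI : SeminormedRing (Matrix m m ℂ) := Matrix.linftyOpSemiNormedRing
  letI : NormedRing (Matrix m m ℂ) := Matrix.linftyOpNormedRing
  letI : NormedAlgebra ℂ (Matrix m m ℂ) := Matrix.linftyOpNormedAlgebra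
  exact exp_smul_of_idem' P hP c

lemma aux_ne {n : ℕ} {p q : Fin n} (hpq : p ≠ q) (i l : Fin n) (a b : ℂ) :
    single i p a * single q l b = 0 :=
  single_mul_single_of_ne (c := a) i p q hpq b

lemma aux_idem {n : ℕ} {p q : Fin n} (hpq : p ≠ q) {α β : ℂ} (hαβ : α * β = 1 / 4) :
    ((2:ℂ)⁻¹ • (single p p (1:ℂ) + single q q 1) + α • single p q 1
      + β • single q p 1) *
    ((2:ℂ)⁻¹ • (single p p (1:ℂ) + single q q 1) + α • single p q 1
      + β • single q p 1) =
    ((2:ℂ)⁻¹ • (single p p (1:ℂ) + single q q 1) + α • single p q 1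
      + β • single q p 1) := by
  simp only [mul_add, add_mul, smul_mul_assoc, mul_smul_comm, smul_smul,
    single_mul_single_same, aux_ne hpq, aux_ne hpq.symm, one_mul, smul_zero, add_zero, zero_add]
  match_scalars <;> first
    | linear_combination hαβ | linear_combination -hαβ
    | linear_combination 2*hαβ | linear_combination -2*hαβ | ring

lemma aux_zero {n : ℕ} {p q : Fin n} (hpq : p ≠ q) {α β : ℂ} (hαβ : α * β = 1 / 4) :
    ((2:ℂ)⁻¹ • (single p p (1:ℂ) + single q q 1) + α • single p q 1
      + β • single q p 1) *
    ((2:ℂ)⁻¹ • (single p p (1:ℂ) + single q q 1) + (-α) • single p q 1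
      + (-β) • single q p 1) = 0 := by
  simp only [mul_add, add_mul, smul_mul_assoc, mul_smul_comm, smul_smul,
    single_mul_single_same, aux_ne hpq, aux_ne hpq.symm, one_mul, smul_zero, add_zero, zero_add]
  rw [show (0 : Matrix (Fin n) (Fin n) ℂ) =
      (0:ℂ) • single p p (1:ℂ) + (0:ℂ) • single q q (1:ℂ) by simp]
  match_scalars <;> first
    | linear_combination hαβ | linear_combination -hαβ
    | linear_combination 2*hαβ | linear_combination -2*hαβ | ring

/-- For `X = z·E_pq − conj(z)·E_qp` with `z ≠ 0` and `p ≠ q`, one has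
`exp((2π/|z|)·X) = 1`; hence `t ↦ exp(tX)` is periodic and the corresponding homogeneous
geodesic on the full flag manifold `F(n)` is closed. -/
theorem stmt13 (n : ℕ) (hn : 2 ≤ n) (p q : Fin n) (hpq : p ≠ q) (z : ℂ) (hz : z ≠ 0) :
    exp (((2 * Real.pi / ‖z‖ : ℝ)) •
        (z • Matrix.single p q (1 : ℂ)
          - (starRingEnd ℂ z) • Matrix.single q p (1 : ℂ))) = 1 := by
  obtain ⟨r, hrdef⟩ : ∃ r : ℝ, r = ‖z‖ := ⟨_, rfl⟩
  have hr0 : (r : ℂ) ≠ 0 := by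
    simp [hrdef, norm_ne_zero_iff, hz]
  have hzz : z * (starRingEnd ℂ) z = (r : ℂ) ^ 2 := by
    rw [Complex.mul_conj, hrdef]
    norm_cast
    rw [← Complex.sq_norm]
  have hαβ : (z / (2 * Complex.I * r)) * (-((starRingEnd ℂ) z) / (2 * Complex.I * r))
      = 1 / 4 := by
    field_simp
    rw [hzz]
    ring_nf
    simp [Complex.I_sq]
  have hαβ' : (-(z / (2 * Complex.I * r))) * (-(-((starRingEnd ℂ) z) / (2 * Complex.I * r)))
      = 1 / 4 := by rw [neg_mul_neg]; exact hαβ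
  set Pp : Matrix (Fin n) (Fin n) ℂ :=
    (2:ℂ)⁻¹ • (single p p (1:ℂ) + single q q 1)
      + (z / (2 * Complex.I * r)) • single p q 1
      + (-((starRingEnd ℂ) z) / (2 * Complex.I * r)) • single q p 1 with hPp
  set Pm : Matrix (Fin n) (Fin n) ℂ :=
    (2:ℂ)⁻¹ • (single p p (1:ℂ) + single q q 1)
      + (-(z / (2 * Complex.I * r))) • single p q 1
      + (-(-((starRingEnd ℂ) z) / (2 * Complex.I * r))) • single q p 1 with hPm
  have hPp2 : Pp * Pp = Pp := aux_idem hpq hαβ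
  have hPm2 : Pm * Pm = Pm := aux_idem hpq hαβ'
  have hPpPm : Pp * Pm = 0 := aux_zero hpq hαβ
  have hPmPp : Pm * Pp = 0 := by
    have := aux_zero hpq hαβ'
    simpa [hPm, hPp, neg_neg] using this
  have hM : ((2 * Real.pi / ‖z‖ : ℝ)) •
        (z • Matrix.single p q (1 : ℂ)
          - (starRingEnd ℂ z) • Matrix.single q p (1 : ℂ)) =
      (2 * Real.pi * Complex.I) • Pp + (-(2 * Real.pi * Complex.I)) • Pm := by
    rw [hPp, hPm, ← hrdef]
    match_scalars <;> push_cast <;>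
      first
      | ring1
      | (field_simp [hr0]
         norm_num [mul_comm, mul_left_comm, mul_assoc])
  rw [hM]
  have hcomm : Commute ((2 * Real.pi * Complex.I) • Pp) ((-(2 * Real.pi * Complex.I)) • Pm) := by
    unfold Commute SemiconjBy
    rw [smul_mul_smul_comm, smul_mul_smul_comm, hPpPm, hPmPp]
    simp
  rw [Matrix.exp_add_of_commute _ _ hcomm]
  rw [matrix_exp_smul_of_idem Pp hPp2, matrix_exp_smul_of_idem Pm hPm2]
  have e1 : Complex.exp (2 * Real.pi * Complex.I) = 1 := Complex.exp_two_pi_mul_I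
  have e2 : Complex.exp (-(2 * Real.pi * Complex.I)) = 1 := by
    rw [Complex.exp_neg, e1]; simp
  rw [e1, e2]
  simp
end

section
/- Fix n ≥ 3 and the block structure on Fin n with three blocks of sizes n−2, 1, 1 (indices 1,…,n−2 in block 1, index n−1 in block 2, index n in block 3). Let A be an n×n skew-Hermitian complex matrix with zero diagonal blocks satisfying the equigeodesic condition (a_{ij}·a_{jm} = 0 for pairwise distinct block indices i, j, m), and suppose A is not essentially block-diagonal, so that the column vectors a_{12}, a_{13} ∈ ℂ^{n−2} are both nonzero. Then the scalar block a_{23} is zero and a_{12} and a_{13} are orthogonal: a_{12}ᴴ·a_{13} = 0. -/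
open Matrix BigOperators

/-- The `(i,j)` block of `A` is nonzero. -/
def blockNeZero {n s : ℕ} (π : Fin n → Fin s) (A : Matrix (Fin n) (Fin n) ℂ)
    (i j : Fin s) : Prop :=
  ∃ p q, π p = i ∧ π q = j ∧ A p q ≠ 0

/-- `A` is essentially block-diagonal: at most one nonzero off-diagonal block in each
block row and in each block column. -/
def EssentiallyBlockDiagonal {n s : ℕ} (π : Fin n → Fin s)
    (A : Matrix (Fin n) (Fin n) ℂ) : Prop :=
  (∀ i j j', j ≠ i → j' ≠ i → blockNeZero π A i j → blockNeZero π A i j' → j = j') ∧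
  (∀ i j j', j ≠ i → j' ≠ i → blockNeZero π A j i → blockNeZero π A j' i → j = j')

/-- On the flag manifold `F(n; n−2, 1, 1)`: an equigeodesic `A` which is not essentially
block-diagonal has `a_{23} = 0` and nonzero, mutually orthogonal column vectors
`a_{12}, a_{13} ∈ ℂ^{n−2}`. Here block `1` consists of the indices `0,…,n−3`, block `2`
of the index `n−2`, and block `3` of the index `n−1`. -/
theorem stmt14 (n : ℕ) (hn : 3 ≤ n) (π : Fin n → Fin 3)
    (hπ : ∀ x : Fin n, π x = if (x : ℕ) < n - 2 then 0 else if (x : ℕ) = n - 2 then 1 else 2)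
    (A : Matrix (Fin n) (Fin n) ℂ) (hA : Aᴴ = -A)
    (hAblocks : ∀ p q, π p = π q → A p q = 0)
    (heq : ∀ (i j m : Fin 3), i ≠ j → j ≠ m → i ≠ m →
      ∀ p q, π p = i → π q = m →
        ∑ r ∈ Finset.univ.filter (fun r => π r = j), A p r * A r q = 0)
    (hnEBD : ¬ EssentiallyBlockDiagonal π A) :
    ∀ i2 i3 : Fin n, (i2 : ℕ) = n - 2 → (i3 : ℕ) = n - 1 →
      A i2 i3 = 0 ∧
      (∃ p, π p = 0 ∧ A p i2 ≠ 0) ∧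
      (∃ p, π p = 0 ∧ A p i3 ≠ 0) ∧
      ∑ p ∈ Finset.univ.filter (fun p => π p = 0),
        (starRingEnd ℂ) (A p i2) * A p i3 = 0 := by

  intro i2 i3 hi2 hi3
  -- characterization of the blocks
  have hπ0 : ∀ q : Fin n, π q = 0 ↔ (q : ℕ) < n - 2 := by
    intro q; rw [hπ q]
    by_cases h1 : (q : ℕ) < n - 2
    · simp [h1]
    · by_cases h2 : (q : ℕ) = n - 2 <;> simp [h1, h2]
  have hπ1 : ∀ q : Fin n, π q = 1 ↔ q = i2 := by
    intro q; rw [hπ q]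
    by_cases h1 : (q : ℕ) < n - 2
    · rw [if_pos h1]
      constructor
      · intro h; exact absurd h (by decide)
      · intro h
        have : (q : ℕ) = n - 2 := by rw [h, hi2]
        omega
    · by_cases h2 : (q : ℕ) = n - 2
      · rw [if_neg h1, if_pos h2]
        constructor
        · intro _; exact Fin.ext (by rw [h2, hi2])
        · intro _; rfl
      · rw [if_neg h1, if_neg h2]
        constructor
        · intro h; exact absurd h (by decide)
        · intro h
          have : (q : ℕ) = n - 2 := by rw [h, hi2]
          omega
  have hπ2 : ∀ q : Fin n, π q = 2 ↔ q = i3 := by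
    intro q; rw [hπ q]
    have hq := q.isLt
    by_cases h1 : (q : ℕ) < n - 2
    · rw [if_pos h1]
      constructor
      · intro h; exact absurd h (by decide)
      · intro h
        have : (q : ℕ) = n - 1 := by rw [h, hi3]
        omega
    · by_cases h2 : (q : ℕ) = n - 2
      · rw [if_neg h1, if_pos h2]
        constructor
        · intro h; exact absurd h (by decide)
        · intro h
          have : (q : ℕ) = n - 1 := by rw [h, hi3]
          omega
      · rw [if_neg h1, if_neg h2]
        constructor
        · intro _; exact Fin.ext (by rw [hi3]; omega)
        · intro _; rfl
  have hpi2 : π i2 = 1 := (hπ1 i2).2 rfl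
  have hpi3 : π i3 = 2 := (hπ2 i3).2 rfl
  -- skew-hermitian entrywise
  have hskew : ∀ p q, A q p = -(starRingEnd ℂ) (A p q) := by
    intro p q
    have h := congrFun (congrFun hA q) p
    rw [Matrix.conjTranspose_apply, Matrix.neg_apply] at h
    simp only [starRingEnd_apply]
    rw [h, neg_neg]
  have hfilt1 : Finset.univ.filter (fun r => π r = 1) = {i2} := by
    ext r; simp [hπ1 r]
  have hfilt2 : Finset.univ.filter (fun r => π r = 2) = {i3} := by
    ext r; simp [hπ2 r]
  -- key step: A i2 i3 = 0
  have h23 : A i2 i3 = 0 := by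
    by_contra h23
    have h32 : A i3 i2 ≠ 0 := by
      rw [hskew i2 i3]
      simp [h23]
    -- all of a_{12}, a_{13} vanish
    have hz3 : ∀ p, π p = 0 → A p i3 = 0 := by
      intro p hp
      have := heq 0 2 1 (by decide) (by decide) (by decide) p i2 hp hpi2
      rw [hfilt2, Finset.sum_singleton] at this
      rcases mul_eq_zero.1 this with h | h
      · exact h
      · exact absurd h h32
    have hz2 : ∀ p, π p = 0 → A p i2 = 0 := by
      intro p hp
      have := heq 0 1 2 (by decide) (by decide) (by decide) p i3 hp hpi3
      rw [hfilt1, Finset.sum_singleton] at this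
      rcases mul_eq_zero.1 this with h | h
      · exact h
      · exact absurd h h23
    -- then A is essentially block-diagonal: contradiction
    have hz : ∀ i j : Fin 3, blockNeZero π A i j → (i = 1 ∧ j = 2) ∨ (i = 2 ∧ j = 1) := by
      rintro i j ⟨p, q, hp, hq, hpq⟩
      fin_cases i <;> fin_cases j <;>
        first
        | (exact absurd (hAblocks p q (hp.trans hq.symm)) hpq)
        | (exact Or.inl ⟨rfl, rfl⟩)
        | (exact Or.inr ⟨rfl, rfl⟩)
        | · exfalso
            apply hpq
            first
            | · rw [(hπ1 q).1 hq]; exact hz2 p hp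
            | · rw [(hπ2 q).1 hq]; exact hz3 p hp
            | · rw [hskew q p, (hπ1 p).1 hp, hz2 q hq]; simp
            | · rw [hskew q p, (hπ2 p).1 hp, hz3 q hq]; simp
    apply hnEBD
    constructor
    · intro i j j' hj hj' h h'
      rcases hz i j h with ⟨hi, hjv⟩ | ⟨hi, hjv⟩ <;>
        rcases hz i j' h' with ⟨hi', hjv'⟩ | ⟨hi', hjv'⟩ <;> subst_vars <;>
        first
        | rfl
        | exact absurd rfl hj
        | exact absurd rfl hj'
        | exact absurd hi' (by decide)
        | exact absurd hi'.symm (by decide)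
        | exact absurd hi (by decide)
        | exact absurd hi.symm (by decide)
    · intro i j j' hj hj' h h'
      rcases hz j i h with ⟨hjv, hi⟩ | ⟨hjv, hi⟩ <;>
        rcases hz j' i h' with ⟨hjv', hi'⟩ | ⟨hjv', hi'⟩ <;> subst_vars <;>
        first
        | rfl
        | exact absurd rfl hj
        | exact absurd rfl hj'
        | exact absurd hi' (by decide)
        | exact absurd hi'.symm (by decide)
        | exact absurd hi (by decide)
        | exact absurd hi.symm (by decide)
  -- nonvanishing of a_{12} and a_{13}
  have h12 : ∃ p, π p = 0 ∧ A p i2 ≠ 0 := by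
    by_contra hcon
    push_neg at hcon
    have hz : ∀ i j : Fin 3, blockNeZero π A i j → (i = 0 ∧ j = 2) ∨ (i = 2 ∧ j = 0) := by
      rintro i j ⟨p, q, hp, hq, hpq⟩
      fin_cases i <;> fin_cases j <;>
        first
        | (exact absurd (hAblocks p q (hp.trans hq.symm)) hpq)
        | (exact Or.inl ⟨rfl, rfl⟩)
        | (exact Or.inr ⟨rfl, rfl⟩)
        | · exfalso
            apply hpq
            first
            | · rw [(hπ1 q).1 hq]; exact hcon p hp
            | · rw [hskew q p, (hπ1 p).1 hp, hcon q hq]; simp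
            | · rw [(hπ1 p).1 hp, (hπ2 q).1 hq]; exact h23
            | · rw [(hπ1 q).1 hq, (hπ2 p).1 hp, hskew i2 i3, h23]; simp
    apply hnEBD
    constructor
    · intro i j j' hj hj' h h'
      rcases hz i j h with ⟨hi, hjv⟩ | ⟨hi, hjv⟩ <;>
        rcases hz i j' h' with ⟨hi', hjv'⟩ | ⟨hi', hjv'⟩ <;> subst_vars <;>
        first
        | rfl
        | exact absurd rfl hj
        | exact absurd rfl hj'
        | exact absurd hi' (by decide)
        | exact absurd hi'.symm (by decide)
        | exact absurd hi (by decide)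
        | exact absurd hi.symm (by decide)
    · intro i j j' hj hj' h h'
      rcases hz j i h with ⟨hjv, hi⟩ | ⟨hjv, hi⟩ <;>
        rcases hz j' i h' with ⟨hjv', hi'⟩ | ⟨hjv', hi'⟩ <;> subst_vars <;>
        first
        | rfl
        | exact absurd rfl hj
        | exact absurd rfl hj'
        | exact absurd hi' (by decide)
        | exact absurd hi'.symm (by decide)
        | exact absurd hi (by decide)
        | exact absurd hi.symm (by decide)
  have h13 : ∃ p, π p = 0 ∧ A p i3 ≠ 0 := by
    by_contra hcon
    push_neg at hcon
    have hz : ∀ i j : Fin 3, blockNeZero π A i j → (i = 0 ∧ j = 1) ∨ (i = 1 ∧ j = 0) := by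
      rintro i j ⟨p, q, hp, hq, hpq⟩
      fin_cases i <;> fin_cases j <;>
        first
        | (exact absurd (hAblocks p q (hp.trans hq.symm)) hpq)
        | (exact Or.inl ⟨rfl, rfl⟩)
        | (exact Or.inr ⟨rfl, rfl⟩)
        | · exfalso
            apply hpq
            first
            | · rw [(hπ2 q).1 hq]; exact hcon p hp
            | · rw [hskew q p, (hπ2 p).1 hp, hcon q hq]; simp
            | · rw [(hπ1 p).1 hp, (hπ2 q).1 hq]; exact h23
            | · rw [(hπ1 q).1 hq, (hπ2 p).1 hp, hskew i2 i3, h23]; simp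
    apply hnEBD
    constructor
    · intro i j j' hj hj' h h'
      rcases hz i j h with ⟨hi, hjv⟩ | ⟨hi, hjv⟩ <;>
        rcases hz i j' h' with ⟨hi', hjv'⟩ | ⟨hi', hjv'⟩ <;> subst_vars <;>
        first
        | rfl
        | exact absurd rfl hj
        | exact absurd rfl hj'
        | exact absurd hi' (by decide)
        | exact absurd hi'.symm (by decide)
        | exact absurd hi (by decide)
        | exact absurd hi.symm (by decide)
    · intro i j j' hj hj' h h'
      rcases hz j i h with ⟨hjv, hi⟩ | ⟨hjv, hi⟩ <;>
        rcases hz j' i h' with ⟨hjv', hi'⟩ | ⟨hjv', hi'⟩ <;> subst_vars <;>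
        first
        | rfl
        | exact absurd rfl hj
        | exact absurd rfl hj'
        | exact absurd hi' (by decide)
        | exact absurd hi'.symm (by decide)
        | exact absurd hi (by decide)
        | exact absurd hi.symm (by decide)
  -- orthogonality
  refine ⟨h23, h12, h13, ?_⟩
  have horth := heq 1 0 2 (by decide) (by decide) (by decide) i2 i3 hpi2 hpi3
  have hrw : ∀ r : Fin n, A i2 r * A r i3 = -((starRingEnd ℂ) (A r i2) * A r i3) := by
    intro r; rw [hskew r i2]; ring
  rw [Finset.sum_congr rfl (fun r _ => hrw r), Finset.sum_neg_distrib, neg_eq_zero] at horth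
  exact horth
end

section
/- Let A be an n×n skew-Hermitian complex matrix with zero diagonal blocks. For each pair of block indices i ≠ j, let B_{ij} be the matrix agreeing with A on the blocks (i,j) and (j,i) and zero elsewhere. Then the commutator A·(Λ∙A) − (Λ∙A)·A has all its off-diagonal-block entries equal to zero for every metric datum Λ if and only if for every pair i ≠ j the commutator A·B_{ij} − B_{ij}·A has all its off-diagonal-block entries equal to zero. -/
open Matrix BigOperators

/-- The matrix agreeing with `A` on the blocks `(i,j)` and `(j,i)` and zero elsewhere. -/
def blockPair {n s : ℕ} (π : Fin n → Fin s) (A : Matrix (Fin n) (Fin n) ℂ) (i j : Fin s) :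
    Matrix (Fin n) (Fin n) ℂ :=
  Matrix.of fun p q =>
    if (π p = i ∧ π q = j) ∨ (π p = j ∧ π q = i) then A p q else 0

lemma pairSum {s : ℕ} (f : Fin s → Fin s → ℂ) (a b : Fin s) :
    (∑ i : Fin s, ∑ j : Fin s,
        if (a = i ∧ b = j) ∨ (a = j ∧ b = i) then f i j else 0)
      = if a = b then f a a else f a b + f b a := by
  rcases eq_or_ne a b with rfl | h
  · rw [if_pos rfl]
    have hc : ∀ i j : Fin s, ((a = i ∧ a = j) ∨ (a = j ∧ a = i)) ↔ (a = i ∧ a = j) := by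
      tauto
    simp only [hc, ite_and]
    simp [Finset.sum_ite_eq]
  · rw [if_neg h]
    have split : ∀ i j : Fin s,
        (if (a = i ∧ b = j) ∨ (a = j ∧ b = i) then f i j else 0)
          = (if b = j ∧ a = i then f i j else 0) + (if a = j ∧ b = i then f i j else 0) := by
      intro i j
      rcases Decidable.em (a = i ∧ b = j) with h1 | h1
      · have h2 : ¬(a = j ∧ b = i) := fun h2 => h (h2.1.trans h1.2.symm)
        rw [if_pos (Or.inl h1), if_pos ⟨h1.2, h1.1⟩, if_neg h2, add_zero]
      · have : ¬(b = j ∧ a = i) := fun hx => h1 ⟨hx.2, hx.1⟩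
        simp [h1, this]
    simp only [split, Finset.sum_add_distrib, ite_and]
    simp [Finset.sum_ite_eq]

lemma key {n s : ℕ} (π : Fin n → Fin s) (Λ : Fin s → Fin s → ℝ)
    (hΛ : ∀ i j, Λ i j = Λ j i) (A : Matrix (Fin n) (Fin n) ℂ)
    (hAblocks : ∀ p q, π p = π q → A p q = 0) (p q : Fin n) :
    (∑ i : Fin s, ∑ j : Fin s,
        (Λ i j : ℂ) * ((A * blockPair π A i j - blockPair π A i j * A) p q))
      = 2 * ((A * metricHadamard π Λ A - metricHadamard π Λ A * A) p q) := by
  have L : ∀ i j : Fin s, (Λ i j : ℂ) *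
      ((A * blockPair π A i j - blockPair π A i j * A) p q)
      = ∑ r : Fin n,
          ((if (π r = i ∧ π q = j) ∨ (π r = j ∧ π q = i)
              then (Λ i j : ℂ) * (A p r * A r q) else 0)
            - (if (π p = i ∧ π r = j) ∨ (π p = j ∧ π r = i)
              then (Λ i j : ℂ) * (A p r * A r q) else 0)) := by
    intro i j
    simp only [Matrix.sub_apply, Matrix.mul_apply, blockPair, Matrix.of_apply]
    rw [← Finset.sum_sub_distrib, Finset.mul_sum]
    refine Finset.sum_congr rfl fun r _ => ?_
    split_ifs <;> ring
  simp only [L]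
  have swap1 : ∀ i : Fin s, (∑ j : Fin s, ∑ r : Fin n,
        ((if (π r = i ∧ π q = j) ∨ (π r = j ∧ π q = i)
            then (Λ i j : ℂ) * (A p r * A r q) else 0)
          - (if (π p = i ∧ π r = j) ∨ (π p = j ∧ π r = i)
            then (Λ i j : ℂ) * (A p r * A r q) else 0)))
      = ∑ r : Fin n, ∑ j : Fin s,
          ((if (π r = i ∧ π q = j) ∨ (π r = j ∧ π q = i)
              then (Λ i j : ℂ) * (A p r * A r q) else 0)
            - (if (π p = i ∧ π r = j) ∨ (π p = j ∧ π r = i)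
              then (Λ i j : ℂ) * (A p r * A r q) else 0)) :=
    fun i => Finset.sum_comm
  simp only [swap1]
  rw [Finset.sum_comm]
  have R : 2 * ((A * metricHadamard π Λ A - metricHadamard π Λ A * A) p q)
      = ∑ r : Fin n, 2 * (A p r * ((Λ (π r) (π q) : ℂ) * A r q)
          - (Λ (π p) (π r) : ℂ) * A p r * A r q) := by
    simp only [Matrix.sub_apply, Matrix.mul_apply, metricHadamard, Matrix.of_apply]
    rw [← Finset.sum_sub_distrib, Finset.mul_sum]
  rw [R]
  refine Finset.sum_congr rfl fun r _ => ?_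
  simp only [Finset.sum_sub_distrib]
  have P1 := pairSum (fun i j => (Λ i j : ℂ) * (A p r * A r q)) (π r) (π q)
  have P2 := pairSum (fun i j => (Λ i j : ℂ) * (A p r * A r q)) (π p) (π r)
  rw [P1, P2]
  have e1 : ((Λ (π q) (π r) : ℝ) : ℂ) = ((Λ (π r) (π q) : ℝ) : ℂ) := by rw [hΛ]
  have e2 : ((Λ (π r) (π p) : ℝ) : ℂ) = ((Λ (π p) (π r) : ℝ) : ℂ) := by rw [hΛ]
  split_ifs with h1 h2 h2
  · rw [hAblocks r q h1, hAblocks p r h2]; ring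
  · rw [hAblocks r q h1]; ring
  · rw [hAblocks p r h2]; ring
  · rw [e1, e2]; ring

/-- `[A, Λ∙A]` has vanishing off-diagonal-block entries for every metric datum `Λ` iff
for every pair of distinct block indices `i ≠ j` the commutator `[A, B_{ij}]` has
vanishing off-diagonal-block entries, where `B_{ij}` is the part of `A` supported on the
blocks `(i,j)` and `(j,i)`. -/
theorem stmt15 (n s : ℕ) (π : Fin n → Fin s) (hπ : Function.Surjective π)
    (A : Matrix (Fin n) (Fin n) ℂ) (hA : Aᴴ = -A)
    (hAblocks : ∀ p q, π p = π q → A p q = 0) :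
    (∀ Λ : Fin s → Fin s → ℝ, (∀ i j, Λ i j = Λ j i) → (∀ i j, i ≠ j → 0 < Λ i j) →
        ∀ p q, π p ≠ π q →
          (A * metricHadamard π Λ A - metricHadamard π Λ A * A) p q = 0) ↔
      (∀ i j : Fin s, i ≠ j → ∀ p q, π p ≠ π q →
        (A * blockPair π A i j - blockPair π A i j * A) p q = 0) := by
  constructor
  · intro h i j hij p q hpq
    set Λ₁ : Fin s → Fin s → ℝ := fun _ _ => 1 with hΛ1
    set Λ₂ : Fin s → Fin s → ℝ := fun a b =>
      1 + (if (a = i ∧ b = j) ∨ (a = j ∧ b = i) then 1 else 0) with hΛ2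
    have hsym2 : ∀ a b, Λ₂ a b = Λ₂ b a := by
      intro a b
      simp only [hΛ2]
      congr 1
      by_cases hc : (a = i ∧ b = j) ∨ (a = j ∧ b = i)
      · rw [if_pos hc, if_pos (by tauto)]
      · rw [if_neg hc, if_neg (by tauto)]
    have hpos2 : ∀ a b, a ≠ b → 0 < Λ₂ a b := by
      intro a b _
      simp only [hΛ2]
      split_ifs <;> norm_num
    have hM : metricHadamard π Λ₂ A = metricHadamard π Λ₁ A + blockPair π A i j := by
      ext p' q'
      simp only [metricHadamard, blockPair, Matrix.of_apply, Matrix.add_apply, hΛ1, hΛ2]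
      split_ifs <;> push_cast <;> ring
    have h2 := h Λ₂ hsym2 hpos2 p q hpq
    have h1 := h Λ₁ (fun _ _ => rfl) (fun _ _ _ => one_pos) p q hpq
    have hdec : (A * blockPair π A i j - blockPair π A i j * A) p q
        = (A * metricHadamard π Λ₂ A - metricHadamard π Λ₂ A * A) p q
          - (A * metricHadamard π Λ₁ A - metricHadamard π Λ₁ A * A) p q := by
      rw [hM, Matrix.mul_add, Matrix.add_mul]
      simp only [Matrix.sub_apply, Matrix.add_apply]
      ring
    rw [hdec, h1, h2, sub_zero]
  · intro h Λ hsym hpos p q hpq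
    have hk := key π Λ hsym A hAblocks p q
    have hz : ∀ i j : Fin s,
        (Λ i j : ℂ) * ((A * blockPair π A i j - blockPair π A i j * A) p q) = 0 := by
      intro i j
      rcases eq_or_ne i j with rfl | hij
      · have hB : blockPair π A i i = 0 := by
          ext p' q'
          simp only [blockPair, Matrix.of_apply, Matrix.zero_apply]
          split_ifs with hc
          · exact hAblocks _ _ (by rcases hc with ⟨h1, h2⟩ | ⟨h1, h2⟩ <;> rw [h1, h2])
          · rfl
        simp [hB]
      · rw [h i j hij p q hpq, mul_zero]
    rw [Finset.sum_congr rfl (fun i _ => Finset.sum_congr rfl fun j _ => hz i j)] at hk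
    simp only [Finset.sum_const_zero] at hk
    have h2 : (2 : ℂ) * ((A * metricHadamard π Λ A - metricHadamard π Λ A * A) p q) = 0 :=
      hk.symm
    exact (mul_eq_zero.mp h2).resolve_left (by norm_num)
end
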